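/- Let 𝔤 be a finite-dimensional unimodular real Lie algebra having an abelian ideal 𝔥 of codimension one. Then for every inner product ⟨·,·⟩ on 𝔤 there is an orthonormal basis of (𝔤,⟨·,·⟩) comprised of geodesic vectors. -/

import Mathlib

open RealInnerProductSpace Real Module



lemma sum_diag_eq {E : Type*} [NormedAddCommGroup E] [InnerProductSpace ℝ E]
    {ι κ : Type*} [Fintype ι] [Fintype κ]
    (b : OrthonormalBasis ι ℝ E) (c : OrthonormalBasis κ ℝ E) (F : E →ₗ[ℝ] E →ₗ[ℝ] ℝ) :
    ∑ i, F (b i) (b i) = ∑ j, F (c j) (c j) := by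
  classical
  have expand : ∀ x : E, x = ∑ j, ⟪c j, x⟫ • c j := by
    intro x
    simpa [OrthonormalBasis.repr_apply_apply] using (c.sum_repr' x).symm
  have par : ∀ j k, (∑ i, ⟪c j, b i⟫ * ⟪c k, b i⟫) = ⟪c j, c k⟫ := by
    intro j k
    have := b.sum_inner_mul_inner (c j) (c k)
    simpa [real_inner_comm] using this
  have horth := orthonormal_iff_ite.mp c.orthonormal
  calc ∑ i, F (b i) (b i)
      = ∑ i, F (∑ j, ⟪c j, b i⟫ • c j) (∑ k, ⟪c k, b i⟫ • c k) := by
        congr 1; ext i; rw [← expand (b i)]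
    _ = ∑ i, ∑ j, ∑ k, ⟪c j, b i⟫ * ⟪c k, b i⟫ * F (c j) (c k) := by
        congr 1; ext i
        simp only [map_sum, LinearMap.sum_apply, LinearMap.map_smul, LinearMap.smul_apply,
          smul_eq_mul, Finset.mul_sum]
        rw [Finset.sum_comm]
        congr 1; ext j; congr 1; ext k; ring
    _ = ∑ j, ∑ k, (∑ i, ⟪c j, b i⟫ * ⟪c k, b i⟫) * F (c j) (c k) := by
        rw [Finset.sum_comm]
        congr 1; ext j
        rw [Finset.sum_comm]
        congr 1; ext k
        rw [Finset.sum_mul]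
    _ = ∑ j, F (c j) (c j) := by
        simp only [par, horth]
        simp [ite_mul]


lemma exists_unit_isotropic {E : Type*} [NormedAddCommGroup E] [InnerProductSpace ℝ E]
    {ι : Type*} [Fintype ι] [Nonempty ι] [DecidableEq ι]
    (b : OrthonormalBasis ι ℝ E) (F : E →ₗ[ℝ] E →ₗ[ℝ] ℝ)
    (h : ∑ i, F (b i) (b i) = 0) : ∃ v : E, ‖v‖ = 1 ∧ F v v = 0 := by
  have hnorm : ∀ i, ‖b i‖ = 1 := b.orthonormal.1
  by_cases hex : ∃ i, F (b i) (b i) = 0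
  · obtain ⟨i, hi⟩ := hex
    exact ⟨b i, hnorm i, hi⟩
  push_neg at hex
  have hpos : ∃ i, 0 < F (b i) (b i) := by
    by_contra hc
    push_neg at hc
    have : ∀ i ∈ Finset.univ, F (b i) (b i) < 0 :=
      fun i _ => lt_of_le_of_ne (hc i) (hex i)
    have := Finset.sum_neg this ⟨Classical.arbitrary ι, Finset.mem_univ _⟩
    linarith
  have hneg : ∃ j, F (b j) (b j) < 0 := by
    by_contra hc
    push_neg at hc
    have : ∀ i ∈ Finset.univ, 0 < F (b i) (b i) :=
      fun i _ => lt_of_le_of_ne (hc i) (Ne.symm (hex i))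
    have := Finset.sum_pos this ⟨Classical.arbitrary ι, Finset.mem_univ _⟩
    linarith
  obtain ⟨i, hi⟩ := hpos
  obtain ⟨j, hj⟩ := hneg
  have hij : i ≠ j := fun hEq => by rw [hEq] at hi; linarith
  set f : ℝ → ℝ := fun t =>
    (cos t)^2 * F (b i) (b i) + (cos t * sin t) * (F (b i) (b j) + F (b j) (b i))
      + (sin t)^2 * F (b j) (b j) with hf
  have hcont : ContinuousOn f (Set.Icc 0 (π/2)) := by fun_prop
  have hle : (0:ℝ) ≤ π/2 := by positivity
  have hmem : (0:ℝ) ∈ Set.Icc (f (π/2)) (f 0) := by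
    constructor <;> simp [hf, Real.cos_pi_div_two, Real.sin_pi_div_two] <;> linarith
  obtain ⟨t, _, ht⟩ := intermediate_value_Icc' hle hcont hmem
  refine ⟨cos t • b i + sin t • b j, ?_, ?_⟩
  · have hinner : ⟪cos t • b i + sin t • b j, cos t • b i + sin t • b j⟫ = 1 := by
      have hbii : ⟪b i, b i⟫ = 1 := real_inner_self_eq_norm_mul_norm (b i) ▸ by rw [hnorm i]; ring
      have hbij : ⟪b i, b j⟫ = 0 := b.orthonormal.2 hij
      have hbji : ⟪b j, b i⟫ = 0 := b.orthonormal.2 hij.symm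
      have hbjj : ⟪b j, b j⟫ = 1 := real_inner_self_eq_norm_mul_norm (b j) ▸ by rw [hnorm j]; ring
      simp only [inner_add_add_self, real_inner_smul_left, real_inner_smul_right,
        hbii, hbij, hbji, hbjj]
      ring_nf
      rw [← Real.sin_sq_add_cos_sq t]; ring
    have := real_inner_self_eq_norm_mul_norm (cos t • b i + sin t • b j)
    rw [hinner] at this
    nlinarith [norm_nonneg (cos t • b i + sin t • b j)]
  · simp only [map_add, LinearMap.map_smul, LinearMap.add_apply, LinearMap.smul_apply,
      smul_eq_mul, map_smul]
    rw [← ht]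
    simp [hf]; ring

lemma coe_orthonormal {E : Type*} [NormedAddCommGroup E] [InnerProductSpace ℝ E]
    (K : Submodule ℝ E) {ι : Type*} (f : ι → K) (hf : Orthonormal ℝ f) :
    Orthonormal ℝ (fun i => (f i : E)) := by
  constructor
  · intro i
    rw [← Submodule.coe_norm]
    exact hf.1 i
  · intro i j hij
    rw [← Submodule.coe_inner]
    exact hf.2 hij

lemma cons_onb {E : Type*} [NormedAddCommGroup E] [InnerProductSpace ℝ E]
    [FiniteDimensional ℝ E] {n : ℕ} (hfr : Module.finrank ℝ E = n + 1) {v : E} (hv : ‖v‖ = 1)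
    {w : Fin n → E} (hw : Orthonormal ℝ w) (hperp : ∀ i, ⟪v, w i⟫ = 0) :
    ∃ b : OrthonormalBasis (Fin (n+1)) ℝ E, ⇑b = Fin.cons v w := by
  set g : Fin (n+1) → E := Fin.cons v w with hg
  have horth : Orthonormal ℝ g := by
    constructor
    · intro i
      refine Fin.cases ?_ ?_ i
      · simpa [hg] using hv
      · intro k
        simpa [hg] using hw.1 k
    · intro i j hij
      refine Fin.cases (motive := fun i => i ≠ j → ⟪g i, g j⟫ = 0) ?_ ?_ i hij
      · intro h0j
        refine Fin.cases (motive := fun j => (0 : Fin (n+1)) ≠ j → ⟪g 0, g j⟫ = 0) ?_ ?_ j h0j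
        · intro h; exact absurd rfl h
        · intro k _
          simpa [hg] using hperp k
      · intro k hkj
        refine Fin.cases (motive := fun j => k.succ ≠ j → ⟪g k.succ, g j⟫ = 0) ?_ ?_ j hkj
        · intro _
          have := hperp k
          simpa [hg, real_inner_comm] using this
        · intro m hkm
          have hk : k ≠ m := fun h => hkm (by rw [h])
          have := hw.2 hk
          simpa [hg] using this
  have hcard : Fintype.card (Fin (n+1)) = Module.finrank ℝ E := by simp [hfr]
  have hli := horth.linearIndependent
  let bb := basisOfLinearIndependentOfCardEqFinrank hli hcard
  have hbb : ⇑bb = g := coe_basisOfLinearIndependentOfCardEqFinrank hli hcard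
  exact ⟨bb.toOrthonormalBasis (by rwa [hbb]), by rw [Basis.coe_toOrthonormalBasis, hbb]⟩

lemma zero_diag_onb (n : ℕ) :
    ∀ {E : Type*} [NormedAddCommGroup E] [InnerProductSpace ℝ E] [FiniteDimensional ℝ E],
      Module.finrank ℝ E = n → ∀ (F : E →ₗ[ℝ] E →ₗ[ℝ] ℝ) (c : OrthonormalBasis (Fin n) ℝ E),
      (∑ i, F (c i) (c i) = 0) →
      ∃ b : OrthonormalBasis (Fin n) ℝ E, ∀ i, F (b i) (b i) = 0 := by
  induction n with
  | zero =>
    intro E _ _ _ _ F c _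
    exact ⟨c, fun i => i.elim0⟩
  | succ n ih =>
    intro E _ _ _ hfr F c hsum
    obtain ⟨v, hv1, hv0⟩ := exists_unit_isotropic c F hsum
    have hvne : v ≠ 0 := by intro h; rw [h, norm_zero] at hv1; norm_num at hv1
    set E' : Submodule ℝ E := (ℝ ∙ v)ᗮ with hE'
    have hfr' : Module.finrank ℝ E' = n := by
      have h1 : Module.finrank ℝ (ℝ ∙ v : Submodule ℝ E) = 1 := finrank_span_singleton hvne
      have h2 := Submodule.finrank_add_finrank_orthogonal (K := (ℝ ∙ v : Submodule ℝ E))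
      rw [hE'] at *
      omega
    let c' : OrthonormalBasis (Fin n) ℝ E' :=
      (stdOrthonormalBasis ℝ E').reindex (finCongr hfr')
    let F' : E' →ₗ[ℝ] E' →ₗ[ℝ] ℝ := F.compl₁₂ E'.subtype E'.subtype
    have hperp : ∀ (f : Fin n → E') (i : Fin n), ⟪v, ((f i : E))⟫ = 0 := fun f i =>
      (Submodule.mem_orthogonal _ _).mp (f i).2 v (Submodule.mem_span_singleton_self v)
    obtain ⟨b₀, hb₀⟩ := cons_onb hfr hv1 (coe_orthonormal E' c' c'.orthonormal) (hperp c')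
    have hsum₀ : ∑ i, F (b₀ i) (b₀ i) = 0 := by
      rw [sum_diag_eq b₀ c]; exact hsum
    have hsum' : ∑ i, F' (c' i) (c' i) = 0 := by
      have : ∑ i, F (b₀ i) (b₀ i) = F v v + ∑ i, F ((c' i : E)) ((c' i : E)) := by
        rw [hb₀, Fin.sum_univ_succ]
        simp [Fin.cons_zero, Fin.cons_succ]
      rw [this, hv0, zero_add] at hsum₀
      simpa [F', LinearMap.compl₁₂_apply] using hsum₀
    obtain ⟨b', hb'⟩ := ih hfr' F' c' hsum'
    obtain ⟨b, hb⟩ := cons_onb hfr hv1 (coe_orthonormal E' b' b'.orthonormal) (hperp b')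
    refine ⟨b, ?_⟩
    intro i
    refine Fin.cases ?_ ?_ i
    · rw [hb]; simpa using hv0
    · intro k
      rw [hb]
      simpa [F', LinearMap.compl₁₂_apply] using hb' k
lemma trace_eq_sum_inner {E : Type*} [NormedAddCommGroup E] [InnerProductSpace ℝ E]
    [FiniteDimensional ℝ E] {ι : Type*} [Fintype ι] [DecidableEq ι]
    (b : OrthonormalBasis ι ℝ E) (T : E →ₗ[ℝ] E) :
    LinearMap.trace ℝ E T = ∑ i, ⟪b i, T (b i)⟫ := by
  rw [LinearMap.trace_eq_matrix_trace ℝ b.toBasis T, Matrix.trace]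
  congr 1
  ext i
  rw [Matrix.diag_apply, LinearMap.toMatrix_apply, b.coe_toBasis,
    b.coe_toBasis_repr_apply, b.repr_apply_apply]



/-- An inner product on a real vector space, given as a positive-definite
symmetric bilinear form. -/
structure IsInnerProduct {L : Type*} [AddCommGroup L] [Module ℝ L]
    (B : L →ₗ[ℝ] L →ₗ[ℝ] ℝ) : Prop where
  symm : ∀ x y : L, B x y = B y x
  posdef : ∀ x : L, x ≠ 0 → 0 < B x x

/-- `Y` is a geodesic vector: `Y ≠ 0` and `⟨[X,Y],Y⟩ = 0` for all `X`. -/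
def IsGeodesicVector {L : Type*} [LieRing L] [LieAlgebra ℝ L]
    (B : L →ₗ[ℝ] L →ₗ[ℝ] ℝ) (Y : L) : Prop :=
  Y ≠ 0 ∧ ∀ X : L, B ⁅X, Y⁆ Y = 0

/-- A family of vectors is orthonormal with respect to the bilinear form `B`. -/
def IsOrthonormalFamily {L : Type*} [AddCommGroup L] [Module ℝ L]
    (B : L →ₗ[ℝ] L →ₗ[ℝ] ℝ) {ι : Type*} [DecidableEq ι] (v : ι → L) : Prop :=
  ∀ i j, B (v i) (v j) = if i = j then 1 else 0

/-- A real Lie algebra is unimodular if every adjoint map is trace-free. -/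
def IsUnimodularLie (L : Type*) [LieRing L] [LieAlgebra ℝ L] : Prop :=
  ∀ X : L, LinearMap.trace ℝ L (LieAlgebra.ad ℝ L X) = 0

/-- A finite-dimensional unimodular real Lie algebra with a codimension-one
abelian ideal has, for every inner product, an orthonormal basis of geodesic vectors. -/
theorem codim_one_abelian_ideal_orthonormal_geodesic_basis
    {L : Type*} [LieRing L] [LieAlgebra ℝ L] [Module.Finite ℝ L]
    (hU : IsUnimodularLie L)
    (H : LieIdeal ℝ L) (hab : IsLieAbelian H)
    (hcodim : Module.finrank ℝ H + 1 = Module.finrank ℝ L)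
    (B : L →ₗ[ℝ] L →ₗ[ℝ] ℝ) (hB : IsInnerProduct B) :
    ∃ b : Basis (Fin (Module.finrank ℝ L)) ℝ L,
      IsOrthonormalFamily B b ∧ ∀ i, IsGeodesicVector B (b i) := by
  classical
  let core : InnerProductSpace.Core ℝ L :=
    { inner := fun x y => B x y
      conj_inner_symm := fun x y => by simpa using hB.symm y x
      re_inner_nonneg := fun x => by
        rcases eq_or_ne x 0 with h | h
        · simp [h]
        · simpa using (hB.posdef x h).le
      add_left := fun x y z => by simp
      smul_left := fun x y r => by simp [mul_comm]
      definite := fun x hx => by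
        by_contra h
        exact absurd hx (hB.posdef x h).ne' }
  letI : NormedAddCommGroup L := core.toNormedAddCommGroup
  letI : InnerProductSpace ℝ L := InnerProductSpace.ofCore core.toCore
  have hBin : ∀ x y : L, ⟪x, y⟫ = B x y := fun x y => rfl
  haveI : FiniteDimensional ℝ L := ‹Module.Finite ℝ L›
  -- the submodule N
  set N : Submodule ℝ L := H.toSubmodule with hN
  have hfrH : finrank ℝ H = finrank ℝ N := rfl
  have hfrN : finrank ℝ N + 1 = finrank ℝ L := by rw [← hfrH]; exact hcodim
  set m : ℕ := finrank ℝ N with hm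
  -- orthogonal complement has dimension 1
  have horthdim : finrank ℝ Nᗮ = 1 := by
    have := Submodule.finrank_add_finrank_orthogonal (K := N)
    omega
  -- pick a unit vector A in Nᗮ
  have hne : Nᗮ ≠ ⊥ := by
    intro h
    rw [h, finrank_bot] at horthdim
    norm_num at horthdim
  obtain ⟨x, hxmem, hxne⟩ := Submodule.exists_mem_ne_zero_of_ne_bot hne
  set A : L := ‖x‖⁻¹ • x with hA
  have hAmem : A ∈ Nᗮ := Submodule.smul_mem _ _ hxmem
  have hAnorm : ‖A‖ = 1 := by
    rw [hA, norm_smul, norm_inv, norm_norm, inv_mul_cancel₀ (norm_ne_zero_iff.mpr hxne)]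
  have hAne : A ≠ 0 := by
    intro h; rw [h, norm_zero] at hAnorm; norm_num at hAnorm
  have hAperp : ∀ h ∈ N, ⟪A, h⟫ = 0 := fun h hh => by
    rw [real_inner_comm]
    exact (Submodule.mem_orthogonal N A).mp hAmem h hh
  -- N is the orthogonal complement of the span of A
  have hspan : (ℝ ∙ A) = Nᗮ := by
    apply Submodule.eq_of_le_of_finrank_eq
    · rwa [Submodule.span_singleton_le_iff_mem]
    · rw [finrank_span_singleton hAne, horthdim]
  have hNeq : N = (ℝ ∙ A)ᗮ := by
    rw [hspan, Submodule.orthogonal_orthogonal]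
  -- decomposition of an arbitrary vector
  have hdecomp : ∀ X : L, ∃ h ∈ N, X = h + (⟪A, X⟫) • A := by
    intro X
    refine ⟨X - (⟪A, X⟫) • A, ?_, by abel⟩
    rw [hNeq, Submodule.mem_orthogonal]
    intro u hu
    obtain ⟨t, rfl⟩ := Submodule.mem_span_singleton.mp hu
    have hAA : ⟪A, A⟫ = 1 := by
      rw [real_inner_self_eq_norm_mul_norm, hAnorm]; ring
    simp only [inner_sub_right, real_inner_smul_left, real_inner_smul_right, hAA,
      mul_one]
    ring
  -- orthonormal basis of N
  let e : OrthonormalBasis (Fin m) ℝ N := (stdOrthonormalBasis ℝ N).reindex (finCongr hm.symm)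
  let adA : L →ₗ[ℝ] L := LieAlgebra.ad ℝ L A
  let F' : N →ₗ[ℝ] N →ₗ[ℝ] ℝ := B.compl₁₂ (adA ∘ₗ N.subtype) N.subtype
  have coe_orth : ∀ (f : Fin m → N), Orthonormal ℝ f → Orthonormal ℝ (fun i => (f i : L)) := by
    intro f hf
    constructor
    · intro i
      rw [← Submodule.coe_norm]
      exact hf.1 i
    · intro i j hij
      rw [← Submodule.coe_inner]
      exact hf.2 hij
  have hperpe : ∀ i, ⟪A, (e i : L)⟫ = 0 := fun i => hAperp _ (e i).2
  obtain ⟨b₀, hb₀⟩ := cons_onb hfrN.symm hAnorm (coe_orth e e.orthonormal) hperpe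
  -- trace identity
  have htr := hU A
  rw [trace_eq_sum_inner b₀ (LieAlgebra.ad ℝ L A)] at htr
  have h00 : b₀ 0 = A := by rw [hb₀]; simp
  have hsucc : ∀ i : Fin m, b₀ i.succ = (e i : L) := fun i => by rw [hb₀]; simp
  rw [Fin.sum_univ_succ] at htr
  simp only [h00, hsucc, LieAlgebra.ad_apply, lie_self, inner_zero_right, zero_add] at htr
  have hsum : ∑ i, F' (e i) (e i) = 0 := by
    have heq : ∀ i, F' (e i) (e i) = ⟪(e i : L), ⁅A, (e i : L)⁆⟫ := by
      intro i
      rw [real_inner_comm, hBin]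
      rfl
    rw [Finset.sum_congr rfl fun i _ => heq i]
    exact htr
  obtain ⟨b', hb'⟩ := zero_diag_onb m hm.symm F' e hsum
  have hb'coe : ∀ i, B ⁅A, (b' i : L)⁆ (b' i : L) = 0 := fun i => hb' i
  -- assemble final basis
  have hperpb' : ∀ i, ⟪A, (b' i : L)⟫ = 0 := fun i => hAperp _ (b' i).2
  obtain ⟨b₁, hb₁⟩ := cons_onb hfrN.symm hAnorm (coe_orth b' b'.orthonormal) hperpb'
  have h10 : b₁ 0 = A := by rw [hb₁]; simp
  have h1succ : ∀ i : Fin m, b₁ i.succ = (b' i : L) := fun i => by rw [hb₁]; simp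
  let bfin : OrthonormalBasis (Fin (finrank ℝ L)) ℝ L := b₁.reindex (finCongr hfrN)
  have hgeo : ∀ k : Fin (m+1), IsGeodesicVector B (b₁ k) := by
    intro k
    refine Fin.cases ?_ ?_ k
    · rw [h10]
      refine ⟨hAne, ?_⟩
      intro X
      obtain ⟨h, hh, hX⟩ := hdecomp X
      have hbr : ⁅X, A⁆ = ⁅h, A⁆ := by
        rw [hX, add_lie, smul_lie, lie_self, smul_zero, add_zero]
      have hmem : ⁅h, A⁆ ∈ N := by
        have h1 : ⁅A, h⁆ ∈ H := H.lie_mem hh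
        have h2 : ⁅h, A⁆ = -⁅A, h⁆ := by rw [← lie_skew]
        rw [h2]
        exact N.neg_mem h1
      rw [hbr, ← hBin, real_inner_comm]
      exact hAperp _ hmem
    · intro k
      rw [h1succ k]
      constructor
      · intro h0
        have h1 := b'.orthonormal.1 k
        have : (b' k) = 0 := Subtype.ext (by simpa using h0)
        rw [this, norm_zero] at h1
        norm_num at h1
      · intro X
        obtain ⟨h, hh, hX⟩ := hdecomp X
        have habel : ⁅h, (b' k : L)⁆ = 0 := by
          have hmem' : (b' k : L) ∈ H := (b' k).2
          have h2 := hab.trivial (⟨h, hh⟩ : H) (⟨(b' k : L), hmem'⟩ : H)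
          have h3 : ((⁅(⟨h, hh⟩ : H), (⟨(b' k : L), hmem'⟩ : H)⁆ : H) : L)
              = ⁅h, (b' k : L)⁆ := rfl
          rw [h2] at h3
          simpa using h3.symm
        have hbr : ⁅X, (b' k : L)⁆ = (⟪A, X⟫) • ⁅A, (b' k : L)⁆ := by
          conv_lhs => rw [hX]
          rw [add_lie, habel, smul_lie, zero_add]
        rw [hbr, map_smul, LinearMap.smul_apply, hb'coe k, smul_zero]
  refine ⟨bfin.toBasis, ?_, ?_⟩
  · intro i j
    rw [bfin.coe_toBasis, ← hBin]
    have := orthonormal_iff_ite.mp bfin.orthonormal i j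
    simpa using this
  · intro i
    have : bfin.toBasis i = b₁ ((finCongr hfrN).symm i) := by
      rw [bfin.coe_toBasis]
      simp [bfin, OrthonormalBasis.reindex_apply]
    rw [this]
    exact hgeo _
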